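/- Let ℓ ≥ 1 and ρ ∈ ℝ. Let u_t, u_{t−ℓ}, v_{t−1}, …, v_{t−ℓ}, and x_{t−ℓ−1}, …, x_{t−1} be square-integrable real random variables on a probability space such that x_{t−j} = ρ·x_{t−j−1} + v_{t−j} for j = 1, …, ℓ, and suppose that E[u_t v_{t−j}] = 0 for j = 1,…,ℓ, E[u_t x_{t−ℓ−1}] = 0, E[u_{t−ℓ} v_{t−j}] = 0 for j = 1,…,ℓ−1, E[u_{t−ℓ} v_{t−ℓ}] = σ_{uv}, and E[u_{t−ℓ} x_{t−ℓ−1}] = 0. Then E[(u_t − u_{t−ℓ})(x_{t−1} − x_{t−ℓ−1})] = −ρ^{ℓ−1} σ_{uv}; in particular this moment is nonzero whenever ρ^{ℓ−1} σ_{uv} ≠ 0. -/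

import Mathlib

open MeasureTheory
open scoped ENNReal


private lemma memL2_mul_integrable {Ω : Type*} [MeasurableSpace Ω] {μ : Measure Ω}
    {f g : Ω → ℝ} (hf : MemLp f 2 μ) (hg : MemLp g 2 μ) :
    Integrable (fun ω => f ω * g ω) μ :=
  memLp_one_iff_integrable.mp
    (hg.smul hf (r := 1) (hpqr := ⟨by simp [ENNReal.inv_two_add_inv_two]⟩))


/-- Failure of instrument validity for the differenced AR(1) predictive regression:
with `x_{t−j} = ρ x_{t−j−1} + v_{t−j}` (here `x j` stands for `x_{t−j}` and `v j` for
`v_{t−j}`), orthogonality conditions as stated, and `E[u_{t−ℓ} v_{t−ℓ}] = σ_{uv}`, one has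
`E[(u_t − u_{t−ℓ})(x_{t−1} − x_{t−ℓ−1})] = −ρ^{ℓ−1} σ_{uv}`, which is nonzero whenever
`ρ^{ℓ−1} σ_{uv} ≠ 0`. -/
theorem stmt_8 {Ω : Type*} [MeasurableSpace Ω] (μ : Measure Ω) [IsProbabilityMeasure μ]
    (ℓ : ℕ) (hℓ : 1 ≤ ℓ) (ρ σuv : ℝ)
    (ut utl : Ω → ℝ) (v x : ℕ → Ω → ℝ)
    (hut : MemLp ut 2 μ) (hutl : MemLp utl 2 μ)
    (hv : ∀ j, 1 ≤ j → j ≤ ℓ → MemLp (v j) 2 μ)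
    (hx : ∀ j, 1 ≤ j → j ≤ ℓ + 1 → MemLp (x j) 2 μ)
    (hrec : ∀ j, 1 ≤ j → j ≤ ℓ → ∀ ω, x j ω = ρ * x (j + 1) ω + v j ω)
    (h1 : ∀ j, 1 ≤ j → j ≤ ℓ → ∫ ω, ut ω * v j ω ∂μ = 0)
    (h2 : ∫ ω, ut ω * x (ℓ + 1) ω ∂μ = 0)
    (h3 : ∀ j, 1 ≤ j → j ≤ ℓ - 1 → ∫ ω, utl ω * v j ω ∂μ = 0)
    (h4 : ∫ ω, utl ω * v ℓ ω ∂μ = σuv)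
    (h5 : ∫ ω, utl ω * x (ℓ + 1) ω ∂μ = 0) :
    ∫ ω, (ut ω - utl ω) * (x 1 ω - x (ℓ + 1) ω) ∂μ = -(ρ ^ (ℓ - 1) * σuv) ∧
      (ρ ^ (ℓ - 1) * σuv ≠ 0 →
        ∫ ω, (ut ω - utl ω) * (x 1 ω - x (ℓ + 1) ω) ∂μ ≠ 0) := by
  have step : ∀ (f : Ω → ℝ), MemLp f 2 μ → ∀ j, 1 ≤ j → j ≤ ℓ →
      ∫ ω, f ω * x j ω ∂μ
        = ρ * ∫ ω, f ω * x (j + 1) ω ∂μ + ∫ ω, f ω * v j ω ∂μ := by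
    intro f hf j hj1 hj2
    have hxj1 : MemLp (x (j + 1)) 2 μ := hx _ (by omega) (by omega)
    have hvj : MemLp (v j) 2 μ := hv _ hj1 hj2
    have hpt : ∀ ω, f ω * x j ω = ρ * (f ω * x (j + 1) ω) + f ω * v j ω := by
      intro ω; rw [hrec j hj1 hj2 ω]; ring
    simp_rw [hpt]
    rw [integral_add ((memL2_mul_integrable hf hxj1).const_mul ρ)
        (memL2_mul_integrable hf hvj), integral_const_mul]
  have hA : ∀ m, m ≤ ℓ → ∫ ω, ut ω * x (ℓ + 1 - m) ω ∂μ = 0 := by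
    intro m
    induction m with
    | zero => intro _; simpa using h2
    | succ n ih =>
      intro hm
      have hidx : ℓ + 1 - (n + 1) = ℓ - n := by omega
      rw [hidx, step ut hut (ℓ - n) (by omega) (by omega),
        show ℓ - n + 1 = ℓ + 1 - n by omega, ih (by omega), h1 (ℓ - n) (by omega) (by omega)]
      ring
  have hB : ∀ m, m ≤ ℓ - 1 → ∫ ω, utl ω * x (ℓ - m) ω ∂μ = ρ ^ m * σuv := by
    intro m
    induction m with
    | zero =>
      intro _
      simp only [Nat.sub_zero, pow_zero, one_mul]
      rw [step utl hutl ℓ hℓ le_rfl, h5, h4]; ring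
    | succ n ih =>
      intro hm
      rw [step utl hutl (ℓ - (n + 1)) (by omega) (by omega),
        show ℓ - (n + 1) + 1 = ℓ - n by omega, ih (by omega),
        h3 (ℓ - (n + 1)) (by omega) (by omega)]
      ring
  have e1 : ∫ ω, ut ω * x 1 ω ∂μ = 0 := by
    have := hA ℓ le_rfl; rwa [show ℓ + 1 - ℓ = 1 by omega] at this
  have e2 : ∫ ω, utl ω * x 1 ω ∂μ = ρ ^ (ℓ - 1) * σuv := by
    have := hB (ℓ - 1) le_rfl; rwa [show ℓ - (ℓ - 1) = 1 by omega] at this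
  have hx1 : MemLp (x 1) 2 μ := hx 1 le_rfl (by omega)
  have hxl : MemLp (x (ℓ + 1)) 2 μ := hx (ℓ + 1) (by omega) le_rfl
  have key : ∀ ω, (ut ω - utl ω) * (x 1 ω - x (ℓ + 1) ω)
      = (ut ω * x 1 ω - ut ω * x (ℓ + 1) ω) - (utl ω * x 1 ω - utl ω * x (ℓ + 1) ω) := by
    intro ω; ring
  have main : ∫ ω, (ut ω - utl ω) * (x 1 ω - x (ℓ + 1) ω) ∂μ = -(ρ ^ (ℓ - 1) * σuv) := by
    simp_rw [key]
    have i1 := memL2_mul_integrable hut hx1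
    have i2 := memL2_mul_integrable hut hxl
    have i3 := memL2_mul_integrable hutl hx1
    have i4 := memL2_mul_integrable hutl hxl
    have i12 : Integrable (fun ω => ut ω * x 1 ω - ut ω * x (ℓ + 1) ω) μ := i1.sub i2
    have i34 : Integrable (fun ω => utl ω * x 1 ω - utl ω * x (ℓ + 1) ω) μ := i3.sub i4
    rw [integral_sub i12 i34, integral_sub i1 i2, integral_sub i3 i4, e1, h2, e2, h5]
    ring
  exact ⟨main, fun h => by rw [main]; simpa using h⟩
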